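/- Let n be a positive integer, I a positive integer with I ≤ (n/4)^{1/3}, and set x_i = ⌊√(n/i)⌋ for 1 ≤ i ≤ I and D = x_I. Then S(n) = ∑_{d=1}^{D} μ(d)·⌊n/d²⌋ + ∑_{i=1}^{I−1} M(x_i) − (I−1)·M(x_I). -/

import Mathlib

open ArithmeticFunction

/-- Number of square-free positive integers not exceeding `n`. -/
def S (n : ℕ) : ℕ := ((Finset.Icc 1 n).filter Squarefree).card

/-- The Mertens function `M(x) = ∑_{1 ≤ i ≤ x} μ(i)`. -/
def M (x : ℕ) : ℤ := ∑ i ∈ Finset.Icc 1 x, moebius i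

lemma sqdvd_iff {a b d : ℕ} (ha : Squarefree a) (hb : b ≠ 0) (hd : d ≠ 0) :
    d ^ 2 ∣ b ^ 2 * a ↔ d ∣ b := by
  constructor
  · intro h
    rw [← Nat.factorization_le_iff_dvd hd hb]
    have ha0 : a ≠ 0 := ha.ne_zero
    have h2 := (Nat.factorization_le_iff_dvd (pow_ne_zero 2 hd)
      (mul_ne_zero (pow_ne_zero 2 hb) ha0)).mpr h
    intro p
    have := h2 p
    rw [Nat.factorization_mul (pow_ne_zero 2 hb) ha0, Nat.factorization_pow,
      Nat.factorization_pow] at this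
    simp only [Finsupp.coe_add, Finsupp.coe_smul, Pi.add_apply, Pi.smul_apply,
      smul_eq_mul] at this
    have ha1 : a.factorization p ≤ 1 := ha.natFactorization_le_one p
    omega
  · intro h
    exact Dvd.dvd.mul_right (pow_dvd_pow_of_dvd h 2) a

lemma indicator_eq {n m : ℕ} (hm : m ∈ Finset.Icc 1 n) :
    (if Squarefree m then (1 : ℤ) else 0) =
      ∑ d ∈ Finset.Icc 1 n, if d ^ 2 ∣ m then moebius d else 0 := by
  simp only [Finset.mem_Icc] at hm
  obtain ⟨a, b, ha, hb, hab, hsq⟩ := Nat.sq_mul_squarefree_of_pos (show 0 < m by omega)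
  have hbn : b ≤ n := by nlinarith [hab, hm.2, ha, hb]
  have hset : (Finset.Icc 1 n).filter (fun d => d ^ 2 ∣ m) = b.divisors := by
    ext d
    simp only [Finset.mem_filter, Finset.mem_Icc, Nat.mem_divisors]
    constructor
    · rintro ⟨⟨h1, h2⟩, hdvd⟩
      rw [← hab] at hdvd
      exact ⟨(sqdvd_iff hsq hb.ne' (by omega)).mp hdvd, hb.ne'⟩
    · rintro ⟨hdvd, -⟩
      have hd0 : d ≠ 0 := by rintro rfl; simp at hdvd; omega
      refine ⟨⟨by omega, le_trans (Nat.le_of_dvd hb hdvd) hbn⟩, ?_⟩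
      rw [← hab]
      exact (sqdvd_iff hsq hb.ne' hd0).mpr hdvd
  rw [Finset.sum_ite, Finset.sum_const_zero, add_zero, hset]
  have : ∑ d ∈ b.divisors, (moebius d : ℤ) = if b = 1 then 1 else 0 := by
    have := coe_mul_zeta_apply (f := (moebius : ArithmeticFunction ℤ)) (x := b)
    rw [moebius_mul_coe_zeta] at this
    rw [← this, one_apply]
  rw [this]
  congr 1
  simp only [eq_iff_iff]
  constructor
  · intro hsqm
    by_contra hb1
    have : ¬ IsUnit b := by simpa [Nat.isUnit_iff] using hb1
    exact this (hsqm b (by rw [← hab]; exact Dvd.dvd.mul_right (by ring_nf; exact dvd_refl _) a))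
  · rintro rfl; simpa using hab ▸ (by simpa using hsq : Squarefree (1 ^ 2 * a))

theorem squarefree_count_fast_formula (n I : ℕ) (hn : 0 < n) (hI : 0 < I)
    (hIle : (I : ℝ) ≤ ((n : ℝ) / 4) ^ ((1 : ℝ) / 3))
    (x : ℕ → ℕ) (hx : ∀ i, x i = ⌊Real.sqrt ((n : ℝ) / (i : ℝ))⌋₊) :
    (S n : ℤ) = (∑ d ∈ Finset.Icc 1 (x I), moebius d * (n / d ^ 2 : ℕ)) +
      (∑ i ∈ Finset.Icc 1 (I - 1), M (x i)) - ((I : ℤ) - 1) * M (x I) := by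
  -- the key equivalence
  have key : ∀ d i : ℕ, 1 ≤ d → 1 ≤ i → (d ≤ x i ↔ i ≤ n / d ^ 2) := by
    intro d i hd hi
    have hi0 : (0 : ℝ) < (i : ℝ) := by exact_mod_cast hi
    rw [hx, Nat.le_floor_iff (Real.sqrt_nonneg _),
      Real.le_sqrt (by positivity) (by positivity),
      le_div_iff₀ hi0, Nat.le_div_iff_mul_le (by positivity)]
    rw [mul_comm (i : ℕ) (d ^ 2)]
    constructor
    · intro h; exact_mod_cast (by push_cast at h ⊢; exact h : ((d ^ 2 * i : ℕ) : ℝ) ≤ (n : ℕ))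
    · intro h; push_cast; exact_mod_cast h
  -- monotonicity and bound
  have hxmono : ∀ i : ℕ, 1 ≤ i → i ≤ I → x I ≤ x i := by
    intro i h1 h2
    rw [hx, hx]
    apply Nat.floor_mono
    apply Real.sqrt_le_sqrt
    apply div_le_div_of_nonneg_left (by positivity) (by exact_mod_cast h1) (by exact_mod_cast h2)
  have hxn : ∀ i : ℕ, 1 ≤ i → x i ≤ n := by
    intro i h1
    rw [hx]
    have h2 : Real.sqrt ((n : ℝ) / (i : ℝ)) ≤ (n : ℝ) := by
      have : ((n : ℝ) / (i : ℝ)) ≤ (n : ℝ) ^ 2 := by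
        rw [div_le_iff₀ (by exact_mod_cast h1)]
        have : (1 : ℝ) ≤ (n : ℝ) := by exact_mod_cast hn
        have : (1 : ℝ) ≤ (i : ℝ) := by exact_mod_cast h1
        nlinarith
      calc Real.sqrt ((n : ℝ) / (i : ℝ)) ≤ Real.sqrt ((n : ℝ) ^ 2) := Real.sqrt_le_sqrt this
        _ = (n : ℝ) := Real.sqrt_sq (by positivity)
    calc ⌊Real.sqrt ((n : ℝ) / (i : ℝ))⌋₊ ≤ ⌊(n : ℝ)⌋₊ := Nat.floor_mono h2
      _ = n := Nat.floor_natCast n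
  set X := x I with hX
  have hXn : X ≤ n := hxn I hI
  -- classical formula
  have h1 : (S n : ℤ) = ∑ d ∈ Finset.Icc 1 n, (moebius d : ℤ) * (n / d ^ 2 : ℕ) := by
    have : (S n : ℤ) = ∑ m ∈ Finset.Icc 1 n, (if Squarefree m then (1 : ℤ) else 0) := by
      rw [S, Finset.sum_ite, Finset.sum_const_zero, add_zero, Finset.sum_const]
      simp
    rw [this, Finset.sum_congr rfl (fun m hm => indicator_eq hm), Finset.sum_comm]
    apply Finset.sum_congr rfl
    intro d _
    rw [Finset.sum_ite, Finset.sum_const_zero, add_zero, Finset.sum_const, nsmul_eq_mul,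
      mul_comm]
    congr 1
    rw [show Finset.Icc 1 n = Finset.Ioc 0 n from Finset.Icc_add_one_left_eq_Ioc 0 n ▸ rfl]
    exact_mod_cast congrArg (Nat.cast : ℕ → ℤ) (Nat.Ioc_filter_dvd_card_eq_div n (d ^ 2))
  -- split the sum
  have hsplit : ∑ d ∈ Finset.Icc 1 n, (moebius d : ℤ) * (n / d ^ 2 : ℕ) =
      (∑ d ∈ Finset.Icc 1 X, (moebius d : ℤ) * (n / d ^ 2 : ℕ)) +
      ∑ d ∈ Finset.Ioc X n, (moebius d : ℤ) * (n / d ^ 2 : ℕ) := by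
    rw [show Finset.Icc 1 n = Finset.Ioc 0 n from Finset.Icc_add_one_left_eq_Ioc 0 n ▸ rfl,
      show Finset.Icc 1 X = Finset.Ioc 0 X from Finset.Icc_add_one_left_eq_Ioc 0 X ▸ rfl]
    exact (Finset.sum_Ioc_consecutive _ (Nat.zero_le X) hXn).symm
  -- tail computation
  have htail : ∑ d ∈ Finset.Ioc X n, (moebius d : ℤ) * (n / d ^ 2 : ℕ) =
      ∑ i ∈ Finset.Icc 1 (I - 1), (M (x i) - M X) := by
    have step1 : ∀ d ∈ Finset.Ioc X n, (moebius d : ℤ) * (n / d ^ 2 : ℕ) =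
        ∑ i ∈ Finset.Icc 1 (I - 1), (if d ≤ x i then (moebius d : ℤ) else 0) := by
      intro d hd
      simp only [Finset.mem_Ioc] at hd
      have hd1 : 1 ≤ d := by omega
      have hk : n / d ^ 2 ≤ I - 1 := by
        have := (key d I hd1 hI).not
        simp only [not_le] at this
        have h2 : n / d ^ 2 < I := (this.mp (by omega))
        omega
      have hcast : ((n / d ^ 2 : ℕ) : ℤ) =
          ∑ i ∈ Finset.Icc 1 (I - 1), (if d ≤ x i then (1 : ℤ) else 0) := by
        have hcong : ∑ i ∈ Finset.Icc 1 (I - 1), (if d ≤ x i then (1 : ℤ) else 0) =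
            ∑ i ∈ Finset.Icc 1 (I - 1), (if i ≤ n / d ^ 2 then (1 : ℤ) else 0) := by
          apply Finset.sum_congr rfl
          intro i hi
          simp only [Finset.mem_Icc] at hi
          rw [if_congr (key d i hd1 hi.1) rfl rfl]
        rw [hcong, Finset.sum_ite, Finset.sum_const_zero, add_zero, Finset.sum_const]
        have hfil : (Finset.Icc 1 (I - 1)).filter (fun i => i ≤ n / d ^ 2) =
            Finset.Icc 1 (n / d ^ 2) := by
          ext j
          simp only [Finset.mem_filter, Finset.mem_Icc]
          omega
        rw [hfil, Nat.card_Icc]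
        simp
      rw [hcast, Finset.mul_sum]
      apply Finset.sum_congr rfl
      intro i _
      rw [mul_ite, mul_one, mul_zero]
    rw [Finset.sum_congr rfl step1, Finset.sum_comm]
    apply Finset.sum_congr rfl
    intro i hi
    simp only [Finset.mem_Icc] at hi
    have hix : X ≤ x i := hxmono i hi.1 (by omega)
    have hixn : x i ≤ n := hxn i hi.1
    rw [Finset.sum_ite, Finset.sum_const_zero, add_zero]
    have hfil : (Finset.Ioc X n).filter (fun d => d ≤ x i) = Finset.Ioc X (x i) := by
      ext d
      simp only [Finset.mem_filter, Finset.mem_Ioc]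
      omega
    rw [hfil]
    have : M (x i) = M X + ∑ d ∈ Finset.Ioc X (x i), (moebius d : ℤ) := by
      rw [M, M, show Finset.Icc 1 (x i) = Finset.Ioc 0 (x i) from Finset.Icc_add_one_left_eq_Ioc 0 _ ▸ rfl,
        show Finset.Icc 1 X = Finset.Ioc 0 X from Finset.Icc_add_one_left_eq_Ioc 0 X ▸ rfl]
      exact (Finset.sum_Ioc_consecutive _ (Nat.zero_le X) hix).symm
    omega
  rw [h1, hsplit, htail, Finset.sum_sub_distrib, Finset.sum_const, Nat.card_Icc]
  have : ((I - 1 + 1 - 1 : ℕ) : ℤ) = (I : ℤ) - 1 := by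
    have : I - 1 + 1 - 1 = I - 1 := by omega
    rw [this]; push_cast [Nat.cast_sub hI]; ring
  rw [nsmul_eq_mul, this]
  ring
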